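/- In a budget-aggregation game with binary symmetric separable strictly convex utilities, a Nash equilibrium always exists; moreover, the greedy procedure that repeatedly selects an alternative approved by the maximum number of remaining agents and lets all those agents place their whole 1/n share on it produces a Nash equilibrium. -/

import Mathlib

def IsStrategy (n m : ℕ) (d : Fin m → ℝ) : Prop :=
  (∀ x, 0 ≤ d x) ∧ ∑ x, d x = 1 / n

def IsNash (n m : ℕ) (u : Fin n → (Fin m → ℝ) → ℝ) (δ : Fin n → Fin m → ℝ) : Prop :=
  (∀ i, IsStrategy n m (δ i)) ∧
  ∀ i, ∀ d, IsStrategy n m d →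
    u i ((∑ j, δ j) - δ i + d) ≤ u i (∑ j, δ j)

/-- The pure strategy profile where each agent `i` puts her whole `1/n` share
on the single alternative `a i`. -/
noncomputable def pureProfile (n m : ℕ) (a : Fin n → Fin m) : Fin n → Fin m → ℝ :=
  fun i x => if x = a i then 1 / n else 0

/-- `GreedyOn A N' a`: the assignment `a` of the agents in `N'` can be produced
by the greedy procedure: repeatedly pick an alternative `x*` approved by a
maximum number of remaining agents, assign all its remaining approvers to `x*`,
and remove them. -/
inductive GreedyOn {n m : ℕ} (A : Fin n → Finset (Fin m)) :
    Finset (Fin n) → (Fin n → Fin m) → Prop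
  | empty (a : Fin n → Fin m) : GreedyOn A ∅ a
  | step (N' : Finset (Fin n)) (a : Fin n → Fin m) (xstar : Fin m)
      (hmax : ∀ y : Fin m,
        (N'.filter (fun i => y ∈ A i)).card ≤ (N'.filter (fun i => xstar ∈ A i)).card)
      (hassign : ∀ i ∈ N'.filter (fun i => xstar ∈ A i), a i = xstar)
      (hrest : GreedyOn A (N' \ N'.filter (fun i => xstar ∈ A i)) a) :
      GreedyOn A N' a

/-- Two-point exchange inequality for convex functions on `[0,1]`. -/
private lemma convex_pair {g : ℝ → ℝ} (hg : ConvexOn ℝ (Set.Icc (0:ℝ) 1) g)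
    {a b h : ℝ} (ha : 0 ≤ a) (hab : a ≤ b) (hh : 0 ≤ h) (hb1 : b + h ≤ 1) :
    g (a + h) + g b ≤ g a + g (b + h) := by
  rcases eq_or_lt_of_le hh with rfl | hh
  · simp
  · have hT : 0 < b + h - a := by linarith
    have hTne : b + h - a ≠ 0 := ne_of_gt hT
    set l : ℝ := (b - a) / (b + h - a) with hl
    set u : ℝ := h / (b + h - a) with hu
    have hl0 : 0 ≤ l := div_nonneg (by linarith) hT.le
    have hu0 : 0 ≤ u := div_nonneg hh.le hT.le
    have hsum : l + u = 1 := by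
      rw [hl, hu, ← add_div, div_eq_one_iff_eq hTne]; ring
    have haS : a ∈ Set.Icc (0:ℝ) 1 := ⟨ha, by linarith⟩
    have hbS : b + h ∈ Set.Icc (0:ℝ) 1 := ⟨by linarith, hb1⟩
    have h1 := hg.2 haS hbS hl0 hu0 hsum
    have h2 := hg.2 haS hbS hu0 hl0 (by linarith)
    rw [smul_eq_mul, smul_eq_mul, smul_eq_mul, smul_eq_mul] at h1 h2
    have e1 : l * a + u * (b + h) = a + h := by
      rw [hl, hu]; field_simp; ring
    have e2 : u * a + l * (b + h) = b := by
      rw [hl, hu]; field_simp; ring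
    rw [e1] at h1
    rw [e2] at h2
    have e3 : l * g a + u * g (b + h) + (u * g a + l * g (b + h))
        = (l + u) * (g a + g (b + h)) := by ring
    rw [hsum, one_mul] at e3
    linarith

/-- Shifting mass `d` onto values `t x ≤ M` gains at most what shifting the
total mass onto `M` gains, for convex `g`. -/
private lemma shift_sum {m : ℕ} {g : ℝ → ℝ} (hg : ConvexOn ℝ (Set.Icc (0:ℝ) 1) g)
    (t d : Fin m → ℝ) (M : ℝ) (hM0 : 0 ≤ M) (hd0 : ∀ x, 0 ≤ d x) :
    ∀ A : Finset (Fin m), (∀ x ∈ A, 0 ≤ t x) → (∀ x ∈ A, t x ≤ M) →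
      (M + ∑ x ∈ A, d x ≤ 1) →
      ∑ x ∈ A, g (t x + d x) ≤ ∑ x ∈ A, g (t x) + (g (M + ∑ x ∈ A, d x) - g M) := by
  intro A
  induction A using Finset.induction_on with
  | empty => intro _ _ _; simp
  | @insert x s hx ih =>
    intro ht0 htM hb
    rw [Finset.sum_insert hx, Finset.sum_insert hx, Finset.sum_insert hx]
    have hdx := hd0 x
    have hDs0 : 0 ≤ ∑ y ∈ s, d y := Finset.sum_nonneg fun y _ => hd0 y
    have hb' : M + (d x + ∑ y ∈ s, d y) ≤ 1 := by
      rw [← Finset.sum_insert hx]; exact hb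
    have hds : M + ∑ y ∈ s, d y ≤ 1 := by linarith
    have ihs := ih (fun y hy => ht0 y (Finset.mem_insert_of_mem hy))
      (fun y hy => htM y (Finset.mem_insert_of_mem hy)) hds
    have hpair := convex_pair hg (ht0 x (Finset.mem_insert_self x s))
      (le_trans (htM x (Finset.mem_insert_self x s)) (by linarith))
      hdx (by linarith : (M + ∑ y ∈ s, d y) + d x ≤ 1)
    have heq : M + (d x + ∑ y ∈ s, d y) = M + ∑ y ∈ s, d y + d x := by ring
    rw [heq]
    linarith

/-- `GreedyOn` only depends on the values of the assignment on the set. -/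
private lemma greedy_congr {n m : ℕ} {A : Fin n → Finset (Fin m)} {S : Finset (Fin n)}
    {a' : Fin n → Fin m} (h : GreedyOn A S a') :
    ∀ a : Fin n → Fin m, (∀ j ∈ S, a j = a' j) → GreedyOn A S a := by
  induction h with
  | empty a' => intro a _; exact GreedyOn.empty a
  | step N' b xstar hmax hassign hrest ih =>
    intro a hag
    refine GreedyOn.step N' a xstar hmax ?_ ?_
    · intro i hi
      rw [hag i (Finset.mem_of_mem_filter i hi)]
      exact hassign i hi
    · exact ih a fun j hj => hag j (Finset.mem_sdiff.1 hj).1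

/-- The greedy procedure can always be executed. -/
private lemma greedy_exists {n m : ℕ} (hm : 0 < m) (A : Fin n → Finset (Fin m))
    (hA : ∀ i, (A i).Nonempty) :
    ∀ S : Finset (Fin n), ∃ a, GreedyOn A S a := by
  intro S
  induction S using Finset.strongInduction with
  | _ S ih =>
    rcases S.eq_empty_or_nonempty with rfl | hS
    · exact ⟨fun _ => ⟨0, hm⟩, GreedyOn.empty _⟩
    · obtain ⟨xstar, -, hmax0⟩ := Finset.exists_max_image Finset.univ
        (fun x => (S.filter (fun i => x ∈ A i)).card) ⟨⟨0, hm⟩, Finset.mem_univ _⟩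
      have hmax : ∀ y : Fin m,
          (S.filter (fun i => y ∈ A i)).card ≤ (S.filter (fun i => xstar ∈ A i)).card :=
        fun y => hmax0 y (Finset.mem_univ y)
      have hFne : (S.filter (fun i => xstar ∈ A i)).Nonempty := by
        obtain ⟨i, hi⟩ := hS
        obtain ⟨y, hy⟩ := hA i
        have h1 : 0 < (S.filter (fun j => y ∈ A j)).card :=
          Finset.card_pos.2 ⟨i, Finset.mem_filter.2 ⟨hi, hy⟩⟩
        exact Finset.card_pos.1 (lt_of_lt_of_le h1 (hmax y))
      have hssub : S \ S.filter (fun i => xstar ∈ A i) ⊂ S :=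
        Finset.sdiff_ssubset (Finset.filter_subset _ _) hFne
      obtain ⟨a', ha'⟩ := ih _ hssub
      refine ⟨fun j => if j ∈ S.filter (fun i => xstar ∈ A i) then xstar else a' j,
        GreedyOn.step S _ xstar hmax (fun i hi => if_pos hi) ?_⟩
      exact greedy_congr ha' _ (fun j hj => if_neg (Finset.mem_sdiff.1 hj).2)

/-- In a greedy outcome, each agent's assigned alternative is approved by her,
and it is assigned strictly more often than any other approved alternative. -/
private lemma greedy_key {n m : ℕ} {A : Fin n → Finset (Fin m)} {S : Finset (Fin n)}
    {a : Fin n → Fin m} (h : GreedyOn A S a) :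
    ∀ i ∈ S, a i ∈ A i ∧ ∀ y ∈ A i, y ≠ a i →
      (S.filter (fun j => a j = y)).card + 1 ≤ (S.filter (fun j => a j = a i)).card := by
  induction h with
  | empty a => intro i hi; simp at hi
  | step N' a xstar hmax hassign hrest ih =>
    intro i hiN
    by_cases hiF : xstar ∈ A i
    · have hiF' : i ∈ N'.filter (fun j => xstar ∈ A j) := Finset.mem_filter.2 ⟨hiN, hiF⟩
      have hai : a i = xstar := hassign i hiF'
      refine ⟨hai ▸ hiF, ?_⟩
      intro y hy hyne
      have hyx : y ≠ xstar := fun hc => hyne (hc.trans hai.symm)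
      have hsub : insert i (N'.filter (fun j => a j = y)) ⊆ N'.filter (fun j => y ∈ A j) := by
        intro j hj
        rcases Finset.mem_insert.1 hj with rfl | hj
        · exact Finset.mem_filter.2 ⟨hiN, hy⟩
        · have hjN := (Finset.mem_filter.1 hj).1
          have hjy := (Finset.mem_filter.1 hj).2
          by_cases hjF : xstar ∈ A j
          · exact absurd (hjy.symm.trans (hassign j (Finset.mem_filter.2 ⟨hjN, hjF⟩))) hyx
          · have hjN'' : j ∈ N' \ N'.filter (fun k => xstar ∈ A k) :=
              Finset.mem_sdiff.2 ⟨hjN, fun hc => hjF (Finset.mem_filter.1 hc).2⟩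
            have hmem := (ih j hjN'').1
            exact Finset.mem_filter.2 ⟨hjN, hjy ▸ hmem⟩
      have hinotin : i ∉ N'.filter (fun j => a j = y) := by
        intro hc
        exact hyx (((Finset.mem_filter.1 hc).2).symm.trans hai)
      calc (N'.filter (fun j => a j = y)).card + 1
          = (insert i (N'.filter (fun j => a j = y))).card :=
            (Finset.card_insert_of_notMem hinotin).symm
        _ ≤ (N'.filter (fun j => y ∈ A j)).card := Finset.card_le_card hsub
        _ ≤ (N'.filter (fun j => xstar ∈ A j)).card := hmax y
        _ ≤ (N'.filter (fun j => a j = xstar)).card := Finset.card_le_card (fun j hj =>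
            Finset.mem_filter.2 ⟨(Finset.mem_filter.1 hj).1, hassign j hj⟩)
        _ = (N'.filter (fun j => a j = a i)).card := by rw [hai]
    · have hiN'' : i ∈ N' \ N'.filter (fun j => xstar ∈ A j) :=
        Finset.mem_sdiff.2 ⟨hiN, fun hc => hiF (Finset.mem_filter.1 hc).2⟩
      obtain ⟨hmem, hlt⟩ := ih i hiN''
      refine ⟨hmem, fun y hy hyne => ?_⟩
      have haix : a i ≠ xstar := fun hc => hiF (hc ▸ hmem)
      have hyx : y ≠ xstar := fun hc => hiF (hc ▸ hy)
      have hfe : ∀ z : Fin m, z ≠ xstar →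
          N'.filter (fun j => a j = z)
            = (N' \ N'.filter (fun k => xstar ∈ A k)).filter (fun j => a j = z) := by
        intro z hz
        ext j
        simp only [Finset.mem_filter, Finset.mem_sdiff]
        constructor
        · rintro ⟨hjN, hjz⟩
          exact ⟨⟨hjN, fun hc => hz (hjz.symm.trans (hassign j (Finset.mem_filter.2 hc)))⟩, hjz⟩
        · rintro ⟨⟨hjN, _⟩, hjz⟩; exact ⟨hjN, hjz⟩
      rw [hfe y hyx, hfe (a i) haix]
      exact hlt y hy hyne

/-- with binary symmetric separable strictly convex utilities, a
Nash equilibrium always exists; moreover, every outcome of the greedy procedure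
is a Nash equilibrium. -/
theorem greedy_gives_nash
    (n m : ℕ) (hn : 0 < n) (hm : 0 < m)
    (A : Fin n → Finset (Fin m)) (hA : ∀ i, (A i).Nonempty)
    (g : Fin n → ℝ → ℝ)
    (hcont : ∀ i, Continuous (g i))
    (hconv : ∀ i, StrictConvexOn ℝ (Set.Icc (0 : ℝ) 1) (g i))
    (hmono : ∀ i, StrictMonoOn (g i) (Set.Icc (0 : ℝ) 1)) :
    (∃ δ, IsNash n m (fun i d => ∑ x ∈ A i, g i (d x)) δ) ∧
    (∀ a : Fin n → Fin m, GreedyOn A Finset.univ a →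
      IsNash n m (fun i d => ∑ x ∈ A i, g i (d x)) (pureProfile n m a)) := by
  have hn' : (0:ℝ) < (n:ℝ) := by exact_mod_cast hn
  have hmain : ∀ a : Fin n → Fin m, GreedyOn A Finset.univ a →
      IsNash n m (fun i d => ∑ x ∈ A i, g i (d x)) (pureProfile n m a) := by
    intro a hga
    have key := greedy_key hga
    set c : Fin m → ℕ := fun x => (Finset.univ.filter (fun j => a j = x)).card with hc
    -- the aggregate distribution
    have hagg : ∀ x : Fin m, (∑ j, pureProfile n m a j) x = (c x : ℝ) * (1 / n) := by
      intro x
      rw [Finset.sum_apply]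
      have h1 : (∑ j, pureProfile n m a j x)
          = ∑ j, (if a j = x then (1/(n:ℝ)) else 0) := by
        refine Finset.sum_congr rfl fun j _ => ?_
        unfold pureProfile
        exact if_congr ⟨Eq.symm, Eq.symm⟩ rfl rfl
      rw [h1, ← Finset.sum_filter, Finset.sum_const, nsmul_eq_mul]
    -- strategies are valid
    have hstrat : ∀ i, IsStrategy n m (pureProfile n m a i) := by
      intro i
      constructor
      · intro x
        unfold pureProfile
        split
        · positivity
        · exact le_refl 0
      · simp [pureProfile, Finset.sum_ite_eq']
    refine ⟨hstrat, ?_⟩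
    intro i d hd
    have hai : a i ∈ A i := (key i (Finset.mem_univ i)).1
    set T : Fin m → ℝ := fun x => (∑ j, pureProfile n m a j) x - pureProfile n m a i x
      with hT
    set M : ℝ := T (a i) with hM
    have hci : 1 ≤ c (a i) :=
      Finset.card_pos.2 ⟨i, Finset.mem_filter.2 ⟨Finset.mem_univ i, rfl⟩⟩
    have hcn : ∀ x, c x ≤ n := by
      intro x
      calc c x ≤ Finset.univ.card := Finset.card_filter_le _ _
        _ = n := by simp
    have hTai : T (a i) = ((c (a i) : ℝ) - 1) * (1 / n) := by
      rw [hT]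
      simp only [hagg (a i)]
      unfold pureProfile
      rw [if_pos rfl]
      ring
    have hTne : ∀ x : Fin m, x ≠ a i → T x = (c x : ℝ) * (1 / n) := by
      intro x hx
      rw [hT]
      simp only [hagg x]
      unfold pureProfile
      rw [if_neg hx]
      ring
    have hM0 : 0 ≤ M := by
      rw [hM, hTai]
      have : (1:ℝ) ≤ (c (a i) : ℝ) := by exact_mod_cast hci
      have h2 : (0:ℝ) ≤ 1 / n := by positivity
      nlinarith
    have ht0 : ∀ x, 0 ≤ T x := by
      intro x
      by_cases hx : x = a i
      · rw [hx]; exact hM0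
      · rw [hTne x hx]; positivity
    have htM : ∀ x ∈ A i, T x ≤ M := by
      intro x hx
      by_cases hxe : x = a i
      · rw [hxe]
      · rw [hTne x hxe, hM, hTai]
        have hkey := (key i (Finset.mem_univ i)).2 x hx hxe
        have : (c x : ℝ) + 1 ≤ (c (a i) : ℝ) := by exact_mod_cast hkey
        have h2 : (0:ℝ) ≤ 1 / n := by positivity
        nlinarith
    have hM1 : M + 1 / n ≤ 1 := by
      rw [hM, hTai]
      have h1 : (c (a i) : ℝ) ≤ (n : ℝ) := by exact_mod_cast hcn (a i)
      have h2 : ((c (a i) : ℝ) - 1) * (1 / n) + 1 / n = (c (a i) : ℝ) / n := by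
        field_simp
        ring
      rw [h2]
      rw [div_le_one hn']
      exact h1
    have hD0 : 0 ≤ ∑ x ∈ A i, d x := Finset.sum_nonneg fun x _ => hd.1 x
    have hDle : ∑ x ∈ A i, d x ≤ 1 / n := by
      rw [← hd.2]
      exact Finset.sum_le_sum_of_subset_of_nonneg (Finset.subset_univ _)
        (fun x _ _ => hd.1 x)
    have hb : M + ∑ x ∈ A i, d x ≤ 1 :=
      le_trans (add_le_add le_rfl hDle) hM1
    have hshift := shift_sum (hconv i).convexOn T d M hM0 hd.1 (A i)
      (fun x _ => ht0 x) htM hb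
    have hmono' := (hmono i).monotoneOn
    have hgM : g i (M + ∑ x ∈ A i, d x) ≤ g i (M + 1 / n) := by
      refine hmono' ⟨by linarith, by linarith⟩ ⟨by positivity, hM1⟩ (by linarith)
    -- compute the right-hand side
    have hRHS : ∑ x ∈ A i, g i ((∑ j, pureProfile n m a j) x)
        = ∑ x ∈ A i, g i (T x) + (g i (M + 1 / n) - g i M) := by
      have hsummand : ∀ x ∈ A i, g i ((∑ j, pureProfile n m a j) x)
          = (if x = a i then g i (M + 1 / n) - g i M else 0) + g i (T x) := by
        intro x hx
        have hpp : pureProfile n m a i x = if x = a i then 1 / (n:ℝ) else 0 := rfl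
        have hTval : T x = (∑ j, pureProfile n m a j) x - pureProfile n m a i x := rfl
        by_cases hxe : x = a i
        · rw [if_pos hxe]
          have h1 : (∑ j, pureProfile n m a j) x = T x + 1 / n := by
            rw [hTval, hpp, if_pos hxe]; ring
          rw [h1, hxe, ← hM]
          ring
        · rw [if_neg hxe]
          have h1 : (∑ j, pureProfile n m a j) x = T x := by
            rw [hTval, hpp, if_neg hxe]; ring
          rw [h1, zero_add]
      rw [Finset.sum_congr rfl hsummand, Finset.sum_add_distrib,
        Finset.sum_ite_eq' (A i) (a i) (fun _ => g i (M + 1 / n) - g i M), if_pos hai]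
      ring
    -- compute the left-hand side
    have hLHS : ∑ x ∈ A i, g i (((∑ j, pureProfile n m a j) - pureProfile n m a i + d) x)
        = ∑ x ∈ A i, g i (T x + d x) := by
      refine Finset.sum_congr rfl fun x _ => ?_
      rw [hT]
      simp [Pi.add_apply, Pi.sub_apply]
    show (∑ x ∈ A i, g i (((∑ j, pureProfile n m a j) - pureProfile n m a i + d) x))
        ≤ ∑ x ∈ A i, g i ((∑ j, pureProfile n m a j) x)
    rw [hLHS, hRHS]
    linarith
  refine ⟨?_, hmain⟩
  obtain ⟨a, ha⟩ := greedy_exists hm A hA Finset.univ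
  exact ⟨pureProfile n m a, hmain a ha⟩
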